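/- For every t > 0 and every h ∈ K with ⟨h, S_t g_n⟩ = 0 for all n, one has (V_t S_t^* − P_{[t,∞)}) h = 0; consequently ‖V_t S_t^* − P_{[t,∞)}‖₂² = ∑_n ‖(V_t S_t^* − P_{[t,∞)}) S_t g_n‖² = ∑_n ‖V_t g_n − S_t g_n‖² whenever the right-hand side is finite. -/

import Mathlib

open MeasureTheory ComplexInnerProductSpace

noncomputable section

/-- The squared Hilbert–Schmidt norm of a bounded operator on an inner product space,
as the supremum over finite orthonormal families `(e_x)_{x ∈ s}` of `∑ ‖T e_x‖²`
(this equals `∑_n ‖T e_n‖²` for any orthonormal basis `(e_n)`). -/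
def hsNormSq {H : Type*} [NormedAddCommGroup H] [InnerProductSpace ℂ H]
    (T : H →L[ℂ] H) : ENNReal :=
  ⨆ (s : Finset H) (_ : Orthonormal ℂ (fun x : s => (x : H))),
    ∑ x ∈ s, ENNReal.ofReal (‖T x‖ ^ 2)

/-- A bounded operator is Hilbert–Schmidt (`T ∈ s₂`) if `∑_n ‖T e_n‖² < ∞` for an
orthonormal basis. -/
def IsHilbertSchmidt {H : Type*} [NormedAddCommGroup H] [InnerProductSpace ℂ H]
    (T : H →L[ℂ] H) : Prop := hsNormSq T < ⊤

/-- The Hilbert–Schmidt norm `‖T‖₂ = (∑_n ‖T e_n‖²)^{1/2}`. -/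
def hsNorm {H : Type*} [NormedAddCommGroup H] [InnerProductSpace ℂ H]
    (T : H →L[ℂ] H) : ℝ := Real.sqrt (hsNormSq T).toReal

/-- The measure defining `K = L²(0,∞)`. -/
def mu0 : Measure ℝ := volume.restrict (Set.Ioi (0:ℝ))

/-- The Hilbert space `K = L²(0,∞)`. -/
abbrev Kspace := Lp ℂ 2 mu0


section AuxHilbert

variable {H : Type*} [NormedAddCommGroup H] [InnerProductSpace ℂ H]

lemma orthonormal_finset_subtype {A : Set H} (hA : Orthonormal ℂ ((↑) : A → H))
    (s : Finset H) (hs : (s : Set H) ⊆ A) : Orthonormal ℂ (fun x : s => (x : H)) := by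
  refine ⟨fun i => hA.1 ⟨(i : H), hs i.2⟩, fun i j hij => ?_⟩
  have hij' : (i : H) ≠ (j : H) := fun h => hij (Subtype.ext h)
  exact hA.2 (show (⟨(i : H), hs i.2⟩ : A) ≠ ⟨(j : H), hs j.2⟩ from
    fun h => hij' (Subtype.mk_eq_mk.mp h))

lemma hasSum_parseval_sq {J : Type*} (b : HilbertBasis J ℂ H) (y : H) :
    HasSum (fun j => ‖⟪b j, y⟫‖ ^ 2) (‖y‖ ^ 2) := by
  have h := b.hasSum_inner_mul_inner y y
  have h2 : (fun j => ⟪y, b j⟫ * ⟪b j, y⟫) = fun j => ((‖⟪b j, y⟫‖ ^ 2 : ℝ) : ℂ) := by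
    funext j
    rw [show (⟪y, b j⟫ : ℂ) = (starRingEnd ℂ) ⟪b j, y⟫ from (inner_conj_symm y (b j)).symm]
    rw [mul_comm, Complex.mul_conj']
    norm_cast
  rw [h2, inner_self_eq_norm_sq_to_K, ← RCLike.ofReal_pow] at h
  exact Complex.hasSum_ofReal.mp h

lemma tsum_le_hsNormSq {J : Type*} {v : J → H} (hv : Orthonormal ℂ v) (T : H →L[ℂ] H) :
    ∑' j, ENNReal.ofReal (‖T (v j)‖ ^ 2) ≤ hsNormSq T := by
  classical
  rw [ENNReal.tsum_eq_iSup_sum]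
  refine iSup_le fun s => ?_
  have hinj : Function.Injective v := hv.linearIndependent.injective
  rw [hsNormSq]
  have horth : Orthonormal ℂ (fun x : (s.image v) => (x : H)) := by
    refine orthonormal_finset_subtype hv.toSubtypeRange _ ?_
    intro x hx
    rcases Finset.mem_image.mp hx with ⟨j, _, rfl⟩
    exact ⟨j, rfl⟩
  refine le_iSup₂_of_le (s.image v) horth ?_
  rw [Finset.sum_image (fun a _ b _ h => hinj h)]

lemma hsNormSq_le_adj [CompleteSpace H] {J : Type*} (b : HilbertBasis J ℂ H) (T : H →L[ℂ] H) :
    hsNormSq T ≤ ∑' j, ENNReal.ofReal (‖ContinuousLinearMap.adjoint T (b j)‖ ^ 2) := by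
  refine iSup_le fun s => iSup_le fun hs => ?_
  have key : ∀ x : H, ENNReal.ofReal (‖T x‖ ^ 2)
      = ∑' j, ENNReal.ofReal (‖⟪x, ContinuousLinearMap.adjoint T (b j)⟫‖ ^ 2) := by
    intro x
    have hps := hasSum_parseval_sq b (T x)
    rw [← hps.tsum_eq, ENNReal.ofReal_tsum_of_nonneg (fun j => sq_nonneg _) hps.summable]
    refine tsum_congr fun j => ?_
    congr 2
    rw [← ContinuousLinearMap.adjoint_inner_left T x (b j), norm_inner_symm]
  calc ∑ x ∈ s, ENNReal.ofReal (‖T x‖ ^ 2)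
      = ∑ x ∈ s, ∑' j, ENNReal.ofReal (‖⟪x, ContinuousLinearMap.adjoint T (b j)⟫‖ ^ 2) :=
        Finset.sum_congr rfl fun x _ => key x
    _ = ∑' j, ∑ x ∈ s, ENNReal.ofReal (‖⟪x, ContinuousLinearMap.adjoint T (b j)⟫‖ ^ 2) :=
        (Summable.tsum_finsetSum fun _ _ => ENNReal.summable).symm
    _ ≤ ∑' j, ENNReal.ofReal (‖ContinuousLinearMap.adjoint T (b j)‖ ^ 2) := by
        refine ENNReal.tsum_le_tsum fun j => ?_
        rw [← ENNReal.ofReal_sum_of_nonneg (fun i _ => sq_nonneg _)]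
        refine ENNReal.ofReal_le_ofReal ?_
        have hb := hs.sum_inner_products_le (x := ContinuousLinearMap.adjoint T (b j))
          (s := s.attach)
        rw [Finset.sum_attach s (fun x => ‖⟪x, ContinuousLinearMap.adjoint T (b j)⟫‖ ^ 2)] at hb
        exact hb

lemma hsNormSq_eq_basis [CompleteSpace H] {J : Type*} (b : HilbertBasis J ℂ H) (T : H →L[ℂ] H) :
    hsNormSq T = ∑' j, ENNReal.ofReal (‖T (b j)‖ ^ 2) := by
  have h1 := hsNormSq_le_adj b T
  have h2 := tsum_le_hsNormSq b.orthonormal (ContinuousLinearMap.adjoint T)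
  have h3 := hsNormSq_le_adj b (ContinuousLinearMap.adjoint T)
  rw [ContinuousLinearMap.adjoint_adjoint] at h3
  exact le_antisymm ((h1.trans h2).trans h3) (tsum_le_hsNormSq b.orthonormal T)

lemma mem_orth_span {s : Set H} {v : H} (hv : ∀ u ∈ s, ⟪u, v⟫ = 0) :
    v ∈ (Submodule.span ℂ s)ᗮ := by
  rw [Submodule.mem_orthogonal]
  intro u hu
  induction hu using Submodule.span_induction with
  | mem x hx => exact hv x hx
  | zero => simp
  | add x y _ _ hx hy => rw [inner_add_left, hx, hy, add_zero]
  | smul c x _ hx => rw [inner_smul_left, hx, mul_zero]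

end AuxHilbert

section AuxMeasure
open Set

lemma map_add_restrict (c t : ℝ) :
    Measure.map (fun x : ℝ => x + t) (volume.restrict (Ioi c)) = volume.restrict (Ioi (c + t)) := by
  have h0 : MeasurePreserving (fun x : ℝ => x + t) volume volume :=
    measurePreserving_add_right volume t
  have hpre : (fun x : ℝ => x + t) ⁻¹' Ioi (c + t) = Ioi c := by
    ext x; simp [mem_Ioi]
  calc Measure.map (fun x : ℝ => x + t) (volume.restrict (Ioi c))
      = Measure.map (fun x : ℝ => x + t)
        (volume.restrict ((fun x : ℝ => x + t) ⁻¹' Ioi (c + t))) := by rw [hpre]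
    _ = (volume.map (fun x : ℝ => x + t)).restrict (Ioi (c + t)) :=
        (Measure.restrict_map h0.measurable measurableSet_Ioi).symm
    _ = volume.restrict (Ioi (c + t)) := by rw [h0.map_eq]

lemma mpAdd (c t : ℝ) : MeasurePreserving (fun x : ℝ => x + t)
    (volume.restrict (Ioi c)) (volume.restrict (Ioi (c + t))) :=
  ⟨(measurePreserving_add_right volume t).measurable, map_add_restrict c t⟩

lemma embAdd (t : ℝ) : MeasurableEmbedding (fun x : ℝ => x + t) :=
  (Homeomorph.addRight t).measurableEmbedding

lemma mpAdd0 (t : ℝ) : MeasurePreserving (fun x : ℝ => x + t) mu0 (volume.restrict (Ioi t)) := by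
  have h := mpAdd 0 t
  rw [zero_add] at h
  exact h

lemma mpSub (t : ℝ) : MeasurePreserving (fun x : ℝ => x - t) (volume.restrict (Ioi t)) mu0 := by
  have h := mpAdd t (-t)
  rw [add_neg_cancel] at h
  simpa [mu0, sub_eq_add_neg] using h

lemma embSub (t : ℝ) : MeasurableEmbedding (fun x : ℝ => x - t) := by
  simpa [sub_eq_add_neg] using embAdd (-t)

lemma mu0_restrict (t : ℝ) (ht : 0 ≤ t) : mu0.restrict (Ioi t) = volume.restrict (Ioi t) := by
  rw [mu0, Measure.restrict_restrict measurableSet_Ioi,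
    inter_eq_left.mpr (Ioi_subset_Ioi ht)]

lemma inner_eq_integral (f g : Kspace) :
    ⟪f, g⟫ = ∫ x, (starRingEnd ℂ) (f x) * g x ∂mu0 := by
  rw [MeasureTheory.L2.inner_def]
  simp only [RCLike.inner_apply]
  congr 1; funext x; ring

section Sops
variable (St Pt : Kspace →L[ℂ] Kspace) (t : ℝ) (ht : 0 < t)
  (hSt : ∀ f : Kspace, (St f : ℝ → ℂ) =ᵐ[mu0] fun x => if t < x then f (x - t) else 0)

include ht hSt in
lemma S_inner_eq (f g : Kspace) : ⟪St f, St g⟫ = ⟪f, g⟫ := by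
  rw [inner_eq_integral, inner_eq_integral]
  have h1 : (fun x => (starRingEnd ℂ) ((St f) x) * (St g) x) =ᵐ[mu0]
      fun x => (Ioi t).indicator
        (fun x => (starRingEnd ℂ) (f (x - t)) * g (x - t)) x := by
    filter_upwards [hSt f, hSt g] with x hfx hgx
    rw [hfx, hgx]
    by_cases hx : t < x
    · simp [indicator, hx, mem_Ioi]
    · simp [indicator, hx, mem_Ioi]
  rw [integral_congr_ae h1, integral_indicator measurableSet_Ioi, mu0_restrict t ht.le]
  exact (mpSub t).integral_comp (embSub t) (fun y => (starRingEnd ℂ) (f y) * g y)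

include ht hSt in
lemma adjoint_S_ae (f : Kspace) :
    (ContinuousLinearMap.adjoint St f : ℝ → ℂ) =ᵐ[mu0] fun x => f (x + t) := by
  have hmem : MemLp (fun x => f (x + t)) 2 mu0 := by
    have h1 : MemLp (⇑f) 2 (volume.restrict (Ioi t)) :=
      (Lp.memLp f).mono_measure
        (by rw [← mu0_restrict t ht.le]; exact Measure.restrict_le_self)
    exact h1.comp_measurePreserving (mpAdd0 t)
  set u : Kspace := hmem.toLp _ with hu
  have hinner : ∀ g : Kspace, ⟪u, g⟫ = ⟪f, St g⟫ := by
    intro g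
    rw [inner_eq_integral, inner_eq_integral]
    have e1 : (fun x => (starRingEnd ℂ) (f x) * (St g) x) =ᵐ[mu0]
        fun x => (Ioi t).indicator
          (fun x => (starRingEnd ℂ) (f x) * g (x - t)) x := by
      filter_upwards [hSt g] with x hx
      rw [hx]
      by_cases h : t < x
      · simp [indicator, h, mem_Ioi]
      · simp [indicator, h, mem_Ioi]
    have e3 : ∫ x, (starRingEnd ℂ) (f (x + t)) * g ((x + t) - t) ∂mu0
        = ∫ x, (starRingEnd ℂ) (f x) * g (x - t) ∂(volume.restrict (Ioi t)) :=
      (mpAdd0 t).integral_comp (embAdd t) (fun x => (starRingEnd ℂ) (f x) * g (x - t))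
    have e4 : (fun x => (starRingEnd ℂ) (f (x + t)) * g ((x + t) - t))
        = fun x => (starRingEnd ℂ) (f (x + t)) * g x := by
      funext x; rw [add_sub_cancel_right]
    have e5 : (fun x => (starRingEnd ℂ) (u x) * g x) =ᵐ[mu0]
        fun x => (starRingEnd ℂ) (f (x + t)) * g x := by
      filter_upwards [hmem.coeFn_toLp] with x hx
      rw [← hu] at hx
      rw [hx]
    rw [integral_congr_ae e5, integral_congr_ae e1,
      integral_indicator measurableSet_Ioi, mu0_restrict t ht.le, ← e3, e4]
  have hadj : ContinuousLinearMap.adjoint St f = u :=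
    ext_inner_right ℂ fun g => by
      rw [ContinuousLinearMap.adjoint_inner_left]; exact (hinner g).symm
  rw [hadj]
  exact hmem.coeFn_toLp

include ht hSt in
lemma adjoint_S_S (f : Kspace) : ContinuousLinearMap.adjoint St (St f) = f :=
  ext_inner_right ℂ fun v => by
    rw [ContinuousLinearMap.adjoint_inner_left]
    exact S_inner_eq St t ht hSt f v

variable (hPt : ∀ f : Kspace, (Pt f : ℝ → ℂ) =ᵐ[mu0] fun x => if t ≤ x then f x else 0)

include ht hSt hPt in
set_option maxHeartbeats 1000000 in
lemma S_adjoint_eq_P (h : Kspace) :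
    St (ContinuousLinearMap.adjoint St h) = Pt h := by
  have h1 := hSt (ContinuousLinearMap.adjoint St h)
  have h2 := adjoint_S_ae St t ht hSt h
  have h3 : ((ContinuousLinearMap.adjoint St h : ℝ → ℂ) ∘ (fun x => x - t))
      =ᵐ[volume.restrict (Ioi t)] ((fun y => h (y + t)) ∘ (fun x => x - t)) :=
    (mpSub t).quasiMeasurePreserving.ae_eq_comp h2
  have h3' : ∀ᵐ x ∂(volume : Measure ℝ), x ∈ Ioi t →
      (ContinuousLinearMap.adjoint St h : ℝ → ℂ) (x - t) = h x := by
    have := (ae_restrict_iff' measurableSet_Ioi).mp h3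
    filter_upwards [this] with x hx hxt
    have hx' := hx hxt
    simp only [Function.comp_apply] at hx'
    rw [hx', sub_add_cancel]
  have h4 : ∀ᵐ x ∂(volume : Measure ℝ), x ≠ t := by
    rw [ae_iff]
    convert Real.volume_singleton (a := t) using 2
    ext x; simp
  refine Lp.ext (h1.trans (Filter.EventuallyEq.trans ?_ (hPt h).symm))
  have h3'' : ∀ᵐ x ∂mu0, x ∈ Ioi t →
      (ContinuousLinearMap.adjoint St h : ℝ → ℂ) (x - t) = h x :=
    Filter.Eventually.filter_mono (ae_mono Measure.restrict_le_self) h3'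
  have h4' : ∀ᵐ x ∂mu0, x ≠ t :=
    Filter.Eventually.filter_mono (ae_mono Measure.restrict_le_self) h4
  filter_upwards [h3'', h4'] with x hx hxt
  by_cases hlt : t < x
  · rw [if_pos hlt, if_pos hlt.le, hx hlt]
  · have hle : ¬ t ≤ x := fun hle => hlt (lt_of_le_of_ne hle (Ne.symm hxt))
    rw [if_neg hlt, if_neg hle]

end Sops
end AuxMeasure

section LinIndep
open Set

lemma coeFn_finset_sum {α : Type*} (s : Finset α) (f : α → Kspace) :
    (↑(∑ i ∈ s, f i) : ℝ → ℂ) =ᵐ[mu0] fun x => ∑ i ∈ s, f i x := by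
  classical
  induction s using Finset.induction_on with
  | empty => simp only [Finset.sum_empty]; exact Lp.coeFn_zero (E := ℂ) (p := 2) (μ := mu0)
  | insert a s' hni ih =>
      rw [Finset.sum_insert hni]
      filter_upwards [Lp.coeFn_add (f a) (∑ i ∈ s', f i), ih] with x hx hx2
      rw [hx]
      simp only [Pi.add_apply, hx2, Finset.sum_insert hni]

lemma exp_eq_exp_all_iff {ι : Type*} (l : ι → ℂ) (hdist : Function.Injective l)
    (i j : ι) (hx : ∀ x : ℝ, Complex.exp (l i * x) = Complex.exp (l j * x)) : i = j := by
  apply hdist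
  set d := l i - l j with hd
  have hone : ∀ x : ℝ, Complex.exp (d * x) = 1 := by
    intro x
    rw [hd, sub_mul, Complex.exp_sub, hx x, div_self (Complex.exp_ne_zero _)]
  have hre : d.re = 0 := by
    have h1 := congrArg (‖·‖) (hone 1)
    rw [Complex.norm_exp, norm_one] at h1
    simp only [Complex.ofReal_one, mul_one] at h1
    have := Real.exp_eq_exp (x := d.re) (y := 0)
    rw [Real.exp_zero] at this
    exact this.mp h1
  have him : d.im = 0 := by
    by_contra him0
    have hx1 := hone (Real.pi / d.im)
    have heq : d * ((Real.pi / d.im : ℝ) : ℂ) = (Real.pi : ℂ) * Complex.I := by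
      apply Complex.ext
      · simp [Complex.mul_re, hre]
      · simp [Complex.mul_im, hre]
        field_simp
    rw [heq, Complex.exp_pi_mul_I] at hx1
    norm_num at hx1
  have : d = 0 := Complex.ext hre him
  exact sub_eq_zero.mp this

lemma linIndep_exp {ι : Type*} (l : ι → ℂ)
    (h1 : ∀ n, (l n).re < 0) (hdist : Function.Injective l)
    (F : ι → Kspace)
    (hF : ∀ n, (F n : ℝ → ℂ) =ᵐ[mu0]
      fun x => (Real.sqrt (-2 * (l n).re) : ℂ) * Complex.exp (l n * x)) :
    LinearIndependent ℂ F := by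
  rw [linearIndependent_iff']
  intro s c hsum i hi
  classical
  set c' : ι → ℂ := fun i => c i * (Real.sqrt (-2 * (l i).re) : ℂ) with hc'
  set φ : ℝ → ℂ := fun x => ∑ i ∈ s, c' i * Complex.exp (l i * x) with hφ
  -- φ vanishes a.e. on (0,∞)
  have hae : φ =ᵐ[mu0] 0 := by
    have h0 : (↑(∑ i ∈ s, c i • F i) : ℝ → ℂ) =ᵐ[mu0] (0 : ℝ → ℂ) := by
      rw [hsum]; exact Lp.coeFn_zero (E := ℂ) (p := 2) (μ := mu0)
    have hsum' := coeFn_finset_sum s (fun i => c i • F i)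
    have h2 : ∀ᵐ x ∂mu0, ∀ i ∈ s,
        ((c i • F i : Kspace) : ℝ → ℂ) x = c' i * Complex.exp (l i * x) := by
      rw [Filter.eventually_all_finset]
      intro i _
      filter_upwards [Lp.coeFn_smul (c i) (F i), hF i] with x hx1 hx2
      rw [hx1, Pi.smul_apply, smul_eq_mul, hx2, hc']
      ring
    filter_upwards [h0, hsum', h2] with x hx0 hx1 hx2
    calc φ x = ∑ i ∈ s, ((c i • F i : Kspace) : ℝ → ℂ) x :=
          (Finset.sum_congr rfl fun i hi => (hx2 i hi).symm)
      _ = (↑(∑ i ∈ s, c i • F i) : ℝ → ℂ) x := hx1.symm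
      _ = 0 := hx0
  -- φ is continuous
  have hcont : Continuous φ := by
    refine continuous_finset_sum _ fun i _ => ?_
    exact continuous_const.mul (Complex.continuous_exp.comp
      (continuous_const.mul Complex.continuous_ofReal))
  -- φ vanishes on (0,∞)
  have hIoi : EqOn φ 0 (Ioi (0:ℝ)) := by
    intro x hx
    by_contra hne
    have hU : IsOpen (Ioi (0:ℝ) ∩ φ ⁻¹' ({0}ᶜ)) :=
      (isOpen_Ioi).inter (hcont.isOpen_preimage _ (isOpen_compl_singleton))
    have hmu : volume (Ioi (0:ℝ) ∩ φ ⁻¹' ({0}ᶜ)) = 0 := by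
      have hnull : mu0 {y | φ y ≠ 0} = 0 := by
        rw [Filter.EventuallyEq, ae_iff] at hae
        simpa using hae
      rw [mu0, Measure.restrict_apply' measurableSet_Ioi] at hnull
      refine measure_mono_null ?_ hnull
      intro y hy
      exact ⟨hy.2, hy.1⟩
    have hpos := hU.measure_pos volume ⟨x, hx, by simpa using hne⟩
    rw [hmu] at hpos
    exact lt_irrefl 0 hpos
  -- φ is analytic on ℝ
  have hana : AnalyticOnNhd ℝ φ univ := by
    refine Finset.analyticOnNhd_fun_sum (𝕜 := ℝ) (E := ℝ) (F := ℂ) _ fun i _ => ?_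
    have h1 : AnalyticOnNhd ℝ (fun x : ℝ => ((x : ℂ))) univ :=
      fun x _ => Complex.ofRealCLM.analyticAt x
    have h2 : AnalyticOnNhd ℝ (fun x : ℝ => (l i : ℂ) * (x : ℂ)) univ :=
      fun x hx => (analyticAt_const).mul (h1 x hx)
    have h3 : AnalyticOnNhd ℝ (fun x : ℝ => Complex.exp (l i * (x : ℂ))) univ := by
      intro x hx
      exact ((analyticAt_cexp.restrictScalars).comp (h2 x hx))
    exact fun x hx => (analyticAt_const).mul (h3 x hx)
  -- identity theorem: φ = 0 everywhere
  have hall : ∀ x : ℝ, φ x = 0 := by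
    have hev : φ =ᶠ[nhds (1:ℝ)] 0 :=
      Filter.eventuallyEq_of_mem (Ioi_mem_nhds one_pos) hIoi
    have := hana.eqOn_zero_of_preconnected_of_eventuallyEq_zero
      isPreconnected_univ (mem_univ (1:ℝ)) hev
    exact fun x => this (mem_univ x)
  -- Dedekind's theorem on characters
  set χ : ι → (Multiplicative ℝ →* ℂ) := fun i =>
    { toFun := fun x => Complex.exp (l i * (Multiplicative.toAdd x : ℝ))
      map_one' := by simp
      map_mul' := by
        intro x y
        simp [toAdd_mul, mul_add, Complex.exp_add] } with hχ
  have hχinj : Function.Injective χ := by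
    intro i j hij
    refine exp_eq_exp_all_iff l hdist i j fun x => ?_
    exact congrFun (congrArg (DFunLike.coe (F := Multiplicative ℝ →* ℂ)) hij)
      (Multiplicative.ofAdd x)
  have hli : LinearIndependent ℂ (fun i => ((χ i : Multiplicative ℝ → ℂ))) :=
    (linearIndependent_monoidHom (Multiplicative ℝ) ℂ).comp χ hχinj
  have hc'0 : c' i = 0 := by
    refine linearIndependent_iff'.mp hli s c' ?_ i hi
    funext x
    have := hall (Multiplicative.toAdd x)
    simpa [hχ, Finset.sum_apply] using this
  have hsqrt : ((Real.sqrt (-2 * (l i).re) : ℝ) : ℂ) ≠ 0 := by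
    rw [Complex.ofReal_ne_zero]
    refine ne_of_gt (Real.sqrt_pos.mpr ?_)
    have := h1 i
    linarith
  have := mul_eq_zero.mp hc'0
  rcases this with h | h
  · exact h
  · exact absurd h hsqrt

end LinIndep

theorem stmt_15' {ι : Type*} [LinearOrder ι] [LocallyFiniteOrderBot ι] [WellFoundedLT ι]
    [Countable ι] (l : ι → ℂ)
    (h1 : ∀ n, (l n).re < 0)
    (h2 : Summable fun n => |(l n).re|)
    (h3 : ∃ R > (0:ℝ), ∀ n, |(l n).im| < R)
    (hdist : Function.Injective l)
    (F : ι → Kspace)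
    (hF : ∀ n, (F n : ℝ → ℂ) =ᵐ[mu0]
      fun x => (Real.sqrt (-2 * (l n).re) : ℂ) * Complex.exp (l n * x))
    (S : ℝ → Kspace →L[ℂ] Kspace)
    (hS : ∀ t ≥ (0:ℝ), ∀ f : Kspace,
      (S t f : ℝ → ℂ) =ᵐ[mu0] fun x => if t < x then f (x - t) else 0)
    (Pinf : ℝ → Kspace →L[ℂ] Kspace)
    (hPinf : ∀ (t : ℝ) (f : Kspace),
      (Pinf t f : ℝ → ℂ) =ᵐ[mu0] fun x => if t ≤ x then f x else 0)
    (V : ℝ → Kspace →L[ℂ] Kspace)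
    (hV₀ : ∀ t ≥ (0:ℝ), ∀ h ∈ (Submodule.span ℂ (Set.range F))ᗮ, V t h = S t h)
    (hVg : ∀ t ≥ (0:ℝ), ∀ n, V t (InnerProductSpace.gramSchmidtNormed ℂ F n) =
      Complex.exp (-Complex.I * t * (l n).im) • InnerProductSpace.gramSchmidtNormed ℂ F n) :
    ∀ t > (0:ℝ),
      (∀ h : Kspace, (∀ n, ⟪S t (InnerProductSpace.gramSchmidtNormed ℂ F n), h⟫ = 0) →
        ((V t).comp (ContinuousLinearMap.adjoint (S t)) - Pinf t) h = 0) ∧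
      ((Summable fun n =>
          ‖V t (InnerProductSpace.gramSchmidtNormed ℂ F n) - S t (InnerProductSpace.gramSchmidtNormed ℂ F n)‖ ^ 2) →
        hsNorm ((V t).comp (ContinuousLinearMap.adjoint (S t)) - Pinf t) ^ 2 =
          ∑' n, ‖((V t).comp (ContinuousLinearMap.adjoint (S t)) - Pinf t)
            (S t (InnerProductSpace.gramSchmidtNormed ℂ F n))‖ ^ 2 ∧
        (∑' n, ‖((V t).comp (ContinuousLinearMap.adjoint (S t)) - Pinf t)
            (S t (InnerProductSpace.gramSchmidtNormed ℂ F n))‖ ^ 2) =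
          ∑' n, ‖V t (InnerProductSpace.gramSchmidtNormed ℂ F n) - S t (InnerProductSpace.gramSchmidtNormed ℂ F n)‖ ^ 2) := by
  intro t ht
  set gN : ι → Kspace := InnerProductSpace.gramSchmidtNormed ℂ F with hgN
  have hSt := hS t ht.le
  have hPt := hPinf t
  have hspan : Submodule.span ℂ (Set.range gN) = Submodule.span ℂ (Set.range F) := by
    rw [hgN, InnerProductSpace.span_gramSchmidtNormed_range, InnerProductSpace.span_gramSchmidt]
  have keyA : ∀ h : Kspace, (∀ n, ⟪S t (gN n), h⟫ = 0) →
      ((V t).comp (ContinuousLinearMap.adjoint (S t)) - Pinf t) h = 0 := by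
    intro h hh
    have hadj : ∀ n, ⟪gN n, ContinuousLinearMap.adjoint (S t) h⟫ = 0 := fun n => by
      rw [ContinuousLinearMap.adjoint_inner_right]
      exact hh n
    have hmem : ContinuousLinearMap.adjoint (S t) h
        ∈ (Submodule.span ℂ (Set.range F))ᗮ := by
      rw [← hspan]
      exact mem_orth_span (by rintro u ⟨n, rfl⟩; exact hadj n)
    have hV := hV₀ t ht.le _ hmem
    simp only [ContinuousLinearMap.sub_apply, ContinuousLinearMap.comp_apply]
    rw [hV, S_adjoint_eq_P (S t) (Pinf t) t ht hSt hPt h, sub_self]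
  refine ⟨keyA, ?_⟩
  intro hsummable
  have hLI : LinearIndependent ℂ F := linIndep_exp l h1 hdist F hF
  have hg : Orthonormal ℂ gN := InnerProductSpace.gramSchmidtNormed_orthonormal hLI
  have hnorm : ∀ f : Kspace, ‖S t f‖ = ‖f‖ := by
    intro f
    rw [@norm_eq_sqrt_re_inner ℂ, @norm_eq_sqrt_re_inner ℂ _ _ _ _ f,
      S_inner_eq (S t) t ht hSt]
  have he : Orthonormal ℂ (fun n => S t (gN n)) := by
    refine ⟨fun n => by rw [hnorm]; exact hg.1 n, fun m n hmn => ?_⟩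
    show ⟪S t (gN m), S t (gN n)⟫ = 0
    rw [S_inner_eq (S t) t ht hSt]
    exact hg.2 hmn
  have heinj : Function.Injective (fun n => S t (gN n)) :=
    he.linearIndependent.injective
  obtain ⟨w, b, hw, hbcoe⟩ := he.toSubtypeRange.exists_hilbertBasis_extension
  set T := (V t).comp (ContinuousLinearMap.adjoint (S t)) - Pinf t with hT
  have hTe : ∀ n, T (S t (gN n)) = V t (gN n) - S t (gN n) := by
    intro n
    have h1' : ContinuousLinearMap.adjoint (S t) (S t (gN n)) = gN n :=
      adjoint_S_S (S t) t ht hSt (gN n)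
    have h2' : Pinf t (S t (gN n)) = S t (gN n) := by
      have h3' := S_adjoint_eq_P (S t) (Pinf t) t ht hSt hPt (S t (gN n))
      rw [h1'] at h3'
      exact h3'.symm
    simp only [hT, ContinuousLinearMap.sub_apply, ContinuousLinearMap.comp_apply,
      h1', h2']
  have horthw : Orthonormal ℂ ((↑) : w → Kspace) := by
    rw [← hbcoe]; exact b.orthonormal
  have hstep1 : ∑' (j : w), ENNReal.ofReal (‖T (b j)‖ ^ 2)
      = ∑' (j : w), ENNReal.ofReal (‖T (j : Kspace)‖ ^ 2) :=
    tsum_congr fun j =>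
      congrArg (fun z => ENNReal.ofReal (‖T z‖ ^ 2)) (congrFun hbcoe j)
  have hreindex : ∑' (j : w), ENNReal.ofReal (‖T (j : Kspace)‖ ^ 2)
      = ∑' n, ENNReal.ofReal (‖T (S t (gN n))‖ ^ 2) := by
    refine tsum_eq_tsum_of_ne_zero_bij
      (f := fun (x : w) => ENNReal.ofReal (‖T (x : Kspace)‖ ^ 2))
      (g := fun n => ENNReal.ofReal (‖T (S t (gN n))‖ ^ 2))
      (fun n => ⟨S t (gN n.1), hw ⟨n.1, rfl⟩⟩) ?_ ?_ ?_
    · intro x y hxy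
      have hval : S t (gN x.1) = S t (gN y.1) := congrArg Subtype.val hxy
      exact Subtype.ext (heinj hval)
    · intro x hx
      have hTx : T (x : Kspace) ≠ 0 := by
        intro h0
        apply hx
        simp only [Function.mem_support, ne_eq, not_not] at *
        rw [h0]
        simp
      have hex : ∃ n, ⟪S t (gN n), (x : Kspace)⟫ ≠ 0 := by
        by_contra hno
        push_neg at hno
        exact hTx (keyA (x : Kspace) hno)
      obtain ⟨n, hn⟩ := hex
      have hxe : (x : Kspace) = S t (gN n) := by
        by_contra hne
        have hne' : (⟨S t (gN n), hw ⟨n, rfl⟩⟩ : w) ≠ x := fun hcon =>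
          hne ((congrArg Subtype.val hcon).symm)
        exact hn (horthw.2 hne')
      have hns : n ∈ Function.support
          (fun n => ENNReal.ofReal (‖T (S t (gN n))‖ ^ 2)) := by
        simp only [Function.mem_support]
        rw [← hxe]
        intro h0
        apply hTx
        have := ENNReal.ofReal_eq_zero.mp h0
        have hnn : (0:ℝ) ≤ ‖T (x : Kspace)‖ ^ 2 := sq_nonneg _
        have : ‖T (x : Kspace)‖ ^ 2 = 0 := le_antisymm this hnn
        simpa using pow_eq_zero_iff (n := 2) (by norm_num) |>.mp this
      exact ⟨⟨n, hns⟩, Subtype.ext hxe.symm⟩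
    · intro x
      rfl
  have hbs := hsNormSq_eq_basis b T
  have hfe : (fun n => ‖T (S t (gN n))‖ ^ 2)
      = fun n => ‖V t (gN n) - S t (gN n)‖ ^ 2 := funext fun n => by rw [hTe]
  have hsummable' : Summable (fun n => ‖T (S t (gN n))‖ ^ 2) := by
    rw [hfe]; exact hsummable
  have hENN : hsNormSq T = ENNReal.ofReal (∑' n, ‖T (S t (gN n))‖ ^ 2) := by
    rw [hbs, hstep1, hreindex,
      ENNReal.ofReal_tsum_of_nonneg (fun n => sq_nonneg _) hsummable']
  constructor
  · rw [hsNorm, Real.sq_sqrt ENNReal.toReal_nonneg, hENN,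
      ENNReal.toReal_ofReal (tsum_nonneg fun n => sq_nonneg _)]
  · exact tsum_congr fun n => by rw [hTe]

/-- in the construction (pairwise distinct `λ_n` satisfying condition
(1), `f_n(x) = (-2 Re λ_n)^{1/2} e^{λ_n x}`, `g_n` their Gram–Schmidt
orthonormalization, `K₀ = (span{f_n})^⊥`, `V_t h = S_t h` on `K₀`,
`V_t g_n = e^{-i t Im λ_n} g_n`): for every `t > 0` and every `h ∈ K` with
`⟨h, S_t g_n⟩ = 0` for all `n`, one has `(V_t S_t^* - P_{[t,∞)}) h = 0`; consequently
`‖V_t S_t^* - P_{[t,∞)}‖₂² = ∑_n ‖(V_t S_t^* - P_{[t,∞)}) S_t g_n‖²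
= ∑_n ‖V_t g_n - S_t g_n‖²` whenever the right-hand side is finite. -/
theorem stmt_15 {ι : Type*} [LinearOrder ι] [LocallyFiniteOrderBot ι] [WellFoundedLT ι]
    [Countable ι] (l : ι → ℂ)
    (h1 : ∀ n, (l n).re < 0)
    (h2 : Summable fun n => |(l n).re|)
    (h3 : ∃ R > (0:ℝ), ∀ n, |(l n).im| < R)
    (hdist : Function.Injective l)
    (F : ι → Kspace)
    (hF : ∀ n, (F n : ℝ → ℂ) =ᵐ[mu0]
      fun x => (Real.sqrt (-2 * (l n).re) : ℂ) * Complex.exp (l n * x))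
    (S : ℝ → Kspace →L[ℂ] Kspace)
    (hS : ∀ t ≥ (0:ℝ), ∀ f : Kspace,
      (S t f : ℝ → ℂ) =ᵐ[mu0] fun x => if t < x then f (x - t) else 0)
    (Pinf : ℝ → Kspace →L[ℂ] Kspace)
    (hPinf : ∀ (t : ℝ) (f : Kspace),
      (Pinf t f : ℝ → ℂ) =ᵐ[mu0] fun x => if t ≤ x then f x else 0)
    (V : ℝ → Kspace →L[ℂ] Kspace)
    (hV₀ : ∀ t ≥ (0:ℝ), ∀ h ∈ (Submodule.span ℂ (Set.range F))ᗮ, V t h = S t h)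
    (hVg : ∀ t ≥ (0:ℝ), ∀ n, V t (InnerProductSpace.gramSchmidtNormed ℂ F n) =
      Complex.exp (-Complex.I * t * (l n).im) • InnerProductSpace.gramSchmidtNormed ℂ F n) :
    ∀ t > (0:ℝ),
      (∀ h : Kspace, (∀ n, ⟪S t (InnerProductSpace.gramSchmidtNormed ℂ F n), h⟫ = 0) →
        ((V t).comp (ContinuousLinearMap.adjoint (S t)) - Pinf t) h = 0) ∧
      ((Summable fun n =>
          ‖V t (InnerProductSpace.gramSchmidtNormed ℂ F n) - S t (InnerProductSpace.gramSchmidtNormed ℂ F n)‖ ^ 2) →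
        hsNorm ((V t).comp (ContinuousLinearMap.adjoint (S t)) - Pinf t) ^ 2 =
          ∑' n, ‖((V t).comp (ContinuousLinearMap.adjoint (S t)) - Pinf t)
            (S t (InnerProductSpace.gramSchmidtNormed ℂ F n))‖ ^ 2 ∧
        (∑' n, ‖((V t).comp (ContinuousLinearMap.adjoint (S t)) - Pinf t)
            (S t (InnerProductSpace.gramSchmidtNormed ℂ F n))‖ ^ 2) =
          ∑' n, ‖V t (InnerProductSpace.gramSchmidtNormed ℂ F n) - S t (InnerProductSpace.gramSchmidtNormed ℂ F n)‖ ^ 2) := by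
  intro t ht
  exact stmt_15' l h1 h2 h3 hdist F hF S hS Pinf hPinf V hV₀ hVg t ht
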